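/- For every p ∈ ℝ³ with p ≠ 0 there exists a unitary 16×16 complex matrix u(p) such that u(p) (M⁻·p) u(p)* is the block-diagonal matrix 2·diag(−|p|·𝟙₄, |p|·𝟙₄, 0₈), i.e. M⁻·p is unitarily similar to the diagonal matrix with eigenvalue −2|p| of multiplicity 4, eigenvalue 2|p| of multiplicity 4, and eigenvalue 0 of multiplicity 8. -/

import Mathlib

noncomputable section
open MeasureTheory Matrix Complex Filter Topology
open scoped Kronecker ENNReal InnerProductSpace RealInnerProductSpace

/-- Pauli matrices -/
def σ1 : Matrix (Fin 2) (Fin 2) ℂ := !![0, 1; 1, 0]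
def σ2 : Matrix (Fin 2) (Fin 2) ℂ := !![0, -I; I, 0]
def σ3 : Matrix (Fin 2) (Fin 2) ℂ := !![1, 0; 0, -1]

/-- Dirac alpha matrices in standard representation -/
def diracAlpha' (s : Matrix (Fin 2) (Fin 2) ℂ) : Matrix (Fin 4) (Fin 4) ℂ :=
  Matrix.reindex finSumFinEquiv finSumFinEquiv (Matrix.fromBlocks 0 s s 0)

def diracAlpha : Fin 3 → Matrix (Fin 4) (Fin 4) ℂ
  | 0 => diracAlpha' σ1
  | 1 => diracAlpha' σ2
  | 2 => diracAlpha' σ3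

def diracBeta : Matrix (Fin 4) (Fin 4) ℂ :=
  Matrix.reindex finSumFinEquiv finSumFinEquiv
    (Matrix.fromBlocks (1 : Matrix (Fin 2) (Fin 2) ℂ) 0 0 (-1 : Matrix (Fin 2) (Fin 2) ℂ))

abbrev R3 := EuclideanSpace ℝ (Fin 3)
abbrev C16 := EuclideanSpace ℂ (Fin 16)

/-- α·p -/
def alphaDot (p : R3) : Matrix (Fin 4) (Fin 4) ℂ :=
  ∑ j : Fin 3, (p j : ℂ) • diracAlpha j

/-- reindexing 4×4 Kronecker products to 16×16 matrices -/
def kron16 (A B : Matrix (Fin 4) (Fin 4) ℂ) : Matrix (Fin 16) (Fin 16) ℂ :=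
  Matrix.reindex finProdFinEquiv finProdFinEquiv (A ⊗ₖ B)

/-- M⁻·p -/
def Mminus (p : R3) : Matrix (Fin 16) (Fin 16) ℂ :=
  kron16 (alphaDot p) 1 - kron16 1 (alphaDot p)

/-- P·M⁺ -/
def MplusDot (P : R3) : Matrix (Fin 16) (Fin 16) ℂ :=
  (2⁻¹ : ℂ) • (kron16 (alphaDot P) 1 + kron16 1 (alphaDot P))

/-- τ(p) -/
def tau (p : R3) : Matrix (Fin 16) (Fin 16) ℂ :=
  -((‖p‖ ^ 2 : ℝ) : ℂ)⁻¹ • kron16 (alphaDot p) (alphaDot p)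

def Pplus (p : R3) : Matrix (Fin 16) (Fin 16) ℂ := (2⁻¹ : ℂ) • (1 + tau p)
def Pminus (p : R3) : Matrix (Fin 16) (Fin 16) ℂ := (2⁻¹ : ℂ) • (1 - tau p)

def Bmat : Matrix (Fin 16) (Fin 16) ℂ := (2 : ℂ) • kron16 diracBeta diracBeta

/-- the diagonal matrix `2 diag(−|p|·𝟙₄, |p|·𝟙₄, 0₈)` -/
def diagMminus (p : R3) : Matrix (Fin 16) (Fin 16) ℂ :=
  Matrix.diagonal fun i =>
    if (i : ℕ) < 4 then (↑(-(2 * ‖p‖)) : ℂ) else if (i : ℕ) < 8 then ((2 * ‖p‖ : ℝ) : ℂ) else 0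

/-! ### Auxiliary lemmas -/

theorem alphaDot_eq (p : R3) : alphaDot p =
    !![0, 0, (p 2 : ℂ), (p 0 : ℂ) - (p 1 : ℂ) * I;
       0, 0, (p 0 : ℂ) + (p 1 : ℂ) * I, -(p 2 : ℂ);
       (p 2 : ℂ), (p 0 : ℂ) - (p 1 : ℂ) * I, 0, 0;
       (p 0 : ℂ) + (p 1 : ℂ) * I, -(p 2 : ℂ), 0, 0] := by
  ext i j
  fin_cases i <;> fin_cases j <;>
    simp (config := { decide := true }) [alphaDot, diracAlpha, diracAlpha', σ1, σ2, σ3,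
      Fin.sum_univ_three,
      Matrix.fromBlocks, finSumFinEquiv, Fin.addCases, Fin.subNat, Fin.castLT, Sum.elim,
      Fin.ext_iff, show ((3:Fin 4):ℕ) - 2 = 1 from rfl, show ((2:Fin 4):ℕ) - 2 = 0 from rfl,
      Matrix.vecHead, Matrix.vecTail] <;> ring_nf

theorem norm_sq_eq (p : R3) :
    ((‖p‖ ^ 2 : ℝ) : ℂ) = (p 0 : ℂ)^2 + (p 1 : ℂ)^2 + (p 2 : ℂ)^2 := by
  have : ‖p‖ ^ 2 = (p 0)^2 + (p 1)^2 + (p 2)^2 := by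
    rw [EuclideanSpace.norm_eq, Real.sq_sqrt (by positivity)]
    simp [Fin.sum_univ_three, Real.norm_eq_abs, sq_abs]
  rw [this]; push_cast; ring

theorem alphaDot_conjTranspose (p : R3) : (alphaDot p)ᴴ = alphaDot p := by
  rw [alphaDot_eq]
  ext i j
  fin_cases i <;> fin_cases j <;>
    simp [Matrix.conjTranspose_apply, Matrix.vecHead, Matrix.vecTail, Complex.ext_iff]

theorem alphaDot_sq (p : R3) :
    alphaDot p * alphaDot p = ((‖p‖ ^ 2 : ℝ) : ℂ) • 1 := by
  rw [alphaDot_eq, norm_sq_eq]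
  ext i j
  fin_cases i <;> fin_cases j <;>
    simp [Matrix.mul_apply, Fin.sum_univ_four, Matrix.one_apply, Matrix.vecHead,
      Matrix.vecTail, Complex.ext_iff] <;>
    ring_nf <;> simp [← Complex.ofReal_pow] <;> ring_nf

theorem alphaDot_trace (p : R3) : Matrix.trace (alphaDot p) = 0 := by
  rw [alphaDot_eq]
  simp [Matrix.trace, Fin.sum_univ_four, Matrix.vecHead, Matrix.vecTail]

theorem kron16_mul (A B C D : Matrix (Fin 4) (Fin 4) ℂ) :
    kron16 A B * kron16 C D = kron16 (A * C) (B * D) := by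
  simp only [kron16, Matrix.reindex_apply, Matrix.submatrix_mul_equiv,
    Matrix.mul_kronecker_mul]

theorem kron16_one : kron16 1 1 = (1 : Matrix (Fin 16) (Fin 16) ℂ) := by
  simp only [kron16, Matrix.one_kronecker_one, Matrix.reindex_apply,
    Matrix.submatrix_one_equiv]

theorem kron16_conjTranspose (A B : Matrix (Fin 4) (Fin 4) ℂ) :
    (kron16 A B)ᴴ = kron16 Aᴴ Bᴴ := by
  simp only [kron16, Matrix.reindex_apply, Matrix.conjTranspose_submatrix]
  congr 1
  ext ⟨i, j⟩ ⟨k, l⟩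
  simp [Matrix.conjTranspose_apply, Matrix.kroneckerMap_apply, mul_comm]

theorem kron16_trace (A B : Matrix (Fin 4) (Fin 4) ℂ) :
    Matrix.trace (kron16 A B) = Matrix.trace A * Matrix.trace B := by
  rw [← Matrix.trace_kronecker]
  simp only [kron16, Matrix.reindex_apply, Matrix.trace]
  rw [← Equiv.sum_comp finProdFinEquiv.symm (fun x => ((A ⊗ₖ B).diag x))]
  rfl

theorem kron16_smul_left (x : ℂ) (A B : Matrix (Fin 4) (Fin 4) ℂ) :
    kron16 (x • A) B = x • kron16 A B := by
  simp only [kron16, Matrix.smul_kronecker, Matrix.reindex_apply, Matrix.submatrix_smul,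
    Pi.smul_apply]

theorem kron16_smul_right (x : ℂ) (A B : Matrix (Fin 4) (Fin 4) ℂ) :
    kron16 A (x • B) = x • kron16 A B := by
  simp only [kron16, Matrix.kronecker_smul, Matrix.reindex_apply, Matrix.submatrix_smul,
    Pi.smul_apply]

theorem Mminus_conjTranspose (p : R3) : (Mminus p)ᴴ = Mminus p := by
  simp only [Mminus, Matrix.conjTranspose_sub, kron16_conjTranspose,
    alphaDot_conjTranspose, Matrix.conjTranspose_one]

theorem Mminus_isHermitian (p : R3) : (Mminus p).IsHermitian := Mminus_conjTranspose p

theorem Mminus_sq (p : R3) : Mminus p * Mminus p =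
    (2 * ((‖p‖ ^ 2 : ℝ) : ℂ)) • 1 - (2 : ℂ) • kron16 (alphaDot p) (alphaDot p) := by
  simp only [Mminus, sub_mul, mul_sub, kron16_mul, one_mul, mul_one, alphaDot_sq,
    kron16_smul_left, kron16_smul_right, kron16_one]
  module

theorem Mminus_cube (p : R3) : Mminus p * Mminus p * Mminus p =
    (4 * ((‖p‖ ^ 2 : ℝ) : ℂ)) • Mminus p := by
  rw [mul_assoc, Mminus_sq]
  have h1 : Mminus p * kron16 (alphaDot p) (alphaDot p)
      = (-((‖p‖ ^ 2 : ℝ) : ℂ)) • Mminus p := by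
    simp only [Mminus, sub_mul, kron16_mul, one_mul, mul_one, alphaDot_sq,
      kron16_smul_left, kron16_smul_right]
    module
  rw [mul_sub, Matrix.mul_smul, Matrix.mul_smul, mul_one, h1]
  module

theorem Mminus_trace (p : R3) : Matrix.trace (Mminus p) = 0 := by
  simp [Mminus, kron16_trace, alphaDot_trace]

theorem Mminus_sq_trace (p : R3) :
    Matrix.trace (Mminus p * Mminus p) = 32 * ((‖p‖ ^ 2 : ℝ) : ℂ) := by
  rw [Mminus_sq]
  simp [kron16_trace, alphaDot_trace, Matrix.trace_smul, Matrix.trace_one]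
  ring

theorem card_lemma (c : ℝ) (hc : 0 < c) (e : Fin 16 → ℝ)
    (h3 : ∀ i, e i = -c ∨ e i = 0 ∨ e i = c)
    (hsum : ∑ i, e i = 0) (hsq : ∑ i, e i ^ 2 = 8 * c ^ 2) :
    (Finset.univ.filter (fun i => e i = c)).card = 4 ∧
    (Finset.univ.filter (fun i => e i = -c)).card = 4 ∧
    (Finset.univ.filter (fun i => e i = 0)).card = 8 := by
  classical
  set S := Finset.univ.filter (fun i => e i = c) with hS
  set T := Finset.univ.filter (fun i => e i = -c) with hT
  set Z := Finset.univ.filter (fun i => e i = 0) with hZ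
  have hcne : -c ≠ c := by linarith
  have hcne0 : c ≠ 0 := ne_of_gt hc
  have h1 : ∑ i, e i = (S.card : ℝ) * c - (T.card : ℝ) * c := by
    have : ∀ i : Fin 16, e i =
        (if e i = c then c else 0) + (if e i = -c then -c else 0) := by
      intro i
      rcases h3 i with h | h | h <;> rw [h] <;>
        simp [hcne, hcne.symm, hcne0, hcne0.symm, neg_eq_zero]
    rw [Finset.sum_congr rfl (fun i _ => this i), Finset.sum_add_distrib,
      ← Finset.sum_filter, ← Finset.sum_filter, Finset.sum_const, Finset.sum_const]
    simp [hS, hT, mul_comm]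
    ring
  have h2 : ∑ i, e i ^ 2 = (S.card : ℝ) * c ^ 2 + (T.card : ℝ) * c ^ 2 := by
    have : ∀ i : Fin 16, e i ^ 2 =
        (if e i = c then c ^ 2 else 0) + (if e i = -c then c ^ 2 else 0) := by
      intro i
      rcases h3 i with h | h | h <;> rw [h] <;>
        simp [hcne, hcne.symm, hcne0, hcne0.symm, neg_eq_zero] <;> ring
    rw [Finset.sum_congr rfl (fun i _ => this i), Finset.sum_add_distrib,
      ← Finset.sum_filter, ← Finset.sum_filter, Finset.sum_const, Finset.sum_const]
    simp [hS, hT, mul_comm]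
  rw [hsum] at h1
  rw [hsq] at h2
  have hab : S.card = T.card := by
    have : (S.card : ℝ) = T.card := by
      have := h1.symm
      have h' : ((S.card : ℝ) - T.card) * c = 0 := by ring_nf; linarith [this]
      rcases mul_eq_zero.mp h' with h | h
      · linarith
      · exact absurd h hcne0
    exact_mod_cast this
  have hab8 : S.card + T.card = 8 := by
    have : ((S.card + T.card : ℕ) : ℝ) = 8 := by
      push_cast
      have hc2 : c ^ 2 ≠ 0 := pow_ne_zero _ hcne0
      have h' : ((S.card : ℝ) + T.card - 8) * c ^ 2 = 0 := by ring_nf; linarith [h2.symm]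
      rcases mul_eq_zero.mp h' with h | h
      · linarith
      · exact absurd h hc2
    exact_mod_cast this
  have hS4 : S.card = 4 := by omega
  have hT4 : T.card = 4 := by omega
  have hZ8 : Z.card = 8 := by
    have hdisjST : Disjoint S T := by
      rw [Finset.disjoint_left]
      intro i hi hi'
      rw [hS, Finset.mem_filter] at hi
      rw [hT, Finset.mem_filter] at hi'
      rw [hi.2] at hi'
      exact hcne hi'.2.symm
    have hdisjSTZ : Disjoint (S ∪ T) Z := by
      rw [Finset.disjoint_left]
      intro i hi hi'
      rw [hZ, Finset.mem_filter] at hi'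
      rcases Finset.mem_union.mp hi with h | h
      · rw [hS, Finset.mem_filter] at h
        rw [hi'.2] at h
        exact hcne0 h.2.symm
      · rw [hT, Finset.mem_filter] at h
        rw [hi'.2] at h
        have : c = 0 := by linarith [h.2]
        exact hcne0 this
    have hunion : S ∪ T ∪ Z = Finset.univ := by
      ext i
      simp only [Finset.mem_union, hS, hT, hZ, Finset.mem_filter, Finset.mem_univ,
        true_and, iff_true]
      rcases h3 i with h | h | h
      · exact Or.inl (Or.inr h)
      · exact Or.inr h
      · exact Or.inl (Or.inl h)
    have := congrArg Finset.card hunion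
    rw [Finset.card_union_of_disjoint hdisjSTZ, Finset.card_union_of_disjoint hdisjST,
      Finset.card_univ] at this
    simp at this
    omega
  exact ⟨hS4, hT4, hZ8⟩

theorem exists_perm (c : ℝ) (hc : 0 < c) (e : Fin 16 → ℝ)
    (hS : (Finset.univ.filter (fun i => e i = c)).card = 4)
    (hT : (Finset.univ.filter (fun i => e i = -c)).card = 4)
    (hZ : (Finset.univ.filter (fun i => e i = 0)).card = 8)
    (h3 : ∀ i, e i = -c ∨ e i = 0 ∨ e i = c) :
    ∃ σ : Equiv.Perm (Fin 16), e ∘ σ =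
      fun i : Fin 16 => if (i : ℕ) < 4 then -c else if (i : ℕ) < 8 then c else 0 := by
  classical
  set d : Fin 16 → ℝ := fun i : Fin 16 => if (i : ℕ) < 4 then -c else if (i : ℕ) < 8 then c else 0
    with hd
  have hcne : -c ≠ c := by linarith
  have hcne0 : c ≠ 0 := ne_of_gt hc
  have hdS : (Finset.univ.filter (fun i => d i = c)).card = 4 := by
    have : Finset.univ.filter (fun i => d i = c)
        = Finset.univ.filter (fun i : Fin 16 => 4 ≤ (i : ℕ) ∧ (i : ℕ) < 8) := by
      ext i
      simp only [Finset.mem_filter, Finset.mem_univ, true_and, hd]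
      split_ifs with h1 h2
      · constructor
        · intro h; exact absurd h hcne
        · intro h; omega
      · constructor
        · intro _; omega
        · intro _; rfl
      · constructor
        · intro h; exact absurd h.symm hcne0
        · intro h; omega
    rw [this]; decide
  have hdT : (Finset.univ.filter (fun i => d i = -c)).card = 4 := by
    have : Finset.univ.filter (fun i => d i = -c)
        = Finset.univ.filter (fun i : Fin 16 => (i : ℕ) < 4) := by
      ext i
      simp only [Finset.mem_filter, Finset.mem_univ, true_and, hd]
      split_ifs with h1 h2
      · constructor
        · intro _; exact h1
        · intro _; rfl
      · constructor
        · intro h; exact absurd h.symm hcne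
        · intro h; omega
      · constructor
        · intro h
          exfalso
          have : c = 0 := by linarith
          exact hcne0 this
        · intro h; omega
    rw [this]; decide
  have hdZ : (Finset.univ.filter (fun i => d i = 0)).card = 8 := by
    have : Finset.univ.filter (fun i => d i = 0)
        = Finset.univ.filter (fun i : Fin 16 => 8 ≤ (i : ℕ)) := by
      ext i
      simp only [Finset.mem_filter, Finset.mem_univ, true_and, hd]
      split_ifs with h1 h2
      · constructor
        · intro h
          exfalso
          have : c = 0 := by linarith
          exact hcne0 this
        · intro h; omega
      · constructor
        · intro h; exact absurd h hcne0
        · intro h; omega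
      · constructor
        · intro _; omega
        · intro _; rfl
    rw [this]; decide
  have h3d : ∀ i, d i = -c ∨ d i = 0 ∨ d i = c := by
    intro i
    simp only [hd]
    split_ifs
    · exact Or.inl rfl
    · exact Or.inr (Or.inr rfl)
    · exact Or.inr (Or.inl rfl)
  have hperm : (List.ofFn e).Perm (List.ofFn d) := by
    rw [← Multiset.coe_eq_coe, ← Fin.univ_val_map, ← Fin.univ_val_map]
    ext a
    rw [Multiset.count_map, Multiset.count_map]
    have hfilter : ∀ f : Fin 16 → ℝ,
        Multiset.card (Multiset.filter (fun i => a = f i) Finset.univ.val)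
          = (Finset.univ.filter (fun i => f i = a)).card := by
      intro f
      rw [← Finset.filter_val]
      have : Finset.univ.filter (fun i => a = f i) = Finset.univ.filter (fun i => f i = a) := by
        ext i; simp [eq_comm]
      rw [this]
      rfl
    rw [hfilter, hfilter]
    by_cases hac : a = c
    · subst hac; rw [hS, hdS]
    by_cases hanc : a = -c
    · subst hanc; rw [hT, hdT]
    by_cases ha0 : a = 0
    · subst ha0; rw [hZ, hdZ]
    · have h1 : Finset.univ.filter (fun i => e i = a) = ∅ := by
        rw [Finset.filter_eq_empty_iff]
        intro i _
        rcases h3 i with h | h | h <;> rw [h] <;>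
          [exact fun hh => hanc hh.symm; exact fun hh => ha0 hh.symm;
            exact fun hh => hac hh.symm]
      have h2 : Finset.univ.filter (fun i => d i = a) = ∅ := by
        rw [Finset.filter_eq_empty_iff]
        intro i _
        rcases h3d i with h | h | h <;> rw [h] <;>
          [exact fun hh => hanc hh.symm; exact fun hh => ha0 hh.symm;
            exact fun hh => hac hh.symm]
      rw [h1, h2]
  have hmono_e := Tuple.monotone_sort e
  have hmono_d := Tuple.monotone_sort d
  have hperm2 : (List.ofFn (e ∘ Tuple.sort e)).Perm (List.ofFn (d ∘ Tuple.sort d)) :=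
    ((Tuple.sort e).ofFn_comp_perm e).trans
      (hperm.trans ((Tuple.sort d).ofFn_comp_perm d).symm)
  have heq : e ∘ Tuple.sort e = d ∘ Tuple.sort d :=
    List.ofFn_injective
      (List.Perm.eq_of_sortedLE hmono_e.sortedLE_ofFn hmono_d.sortedLE_ofFn hperm2)
  refine ⟨(Tuple.sort d).symm.trans (Tuple.sort e), ?_⟩
  funext i
  have := congrFun heq ((Tuple.sort d).symm i)
  simpa using this

/-- STATEMENT 3: for `p ≠ 0`, `M⁻·p` is unitarily similar to
`2 diag(−|p|·𝟙₄, |p|·𝟙₄, 0₈)`. -/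
theorem stmt3 (p : R3) (hp : p ≠ 0) :
    ∃ u ∈ Matrix.unitaryGroup (Fin 16) ℂ, u * Mminus p * uᴴ = diagMminus p := by
  classical
  have hH := Mminus_isHermitian p
  set U : Matrix (Fin 16) (Fin 16) ℂ := (hH.eigenvectorUnitary : Matrix (Fin 16) (Fin 16) ℂ)
    with hUdef
  have hUmem : U ∈ Matrix.unitaryGroup (Fin 16) ℂ := hH.eigenvectorUnitary.2
  have hUU : star U * U = 1 := Matrix.mem_unitaryGroup_iff'.mp hUmem
  have hUU' : U * star U = 1 := Matrix.mem_unitaryGroup_iff.mp hUmem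
  set ev : Fin 16 → ℝ := hH.eigenvalues with hev
  set f : Fin 16 → ℂ := fun i => ((ev i : ℝ) : ℂ) with hf
  have hdiag : star U * Mminus p * U = Matrix.diagonal f :=
    by
      have h := Matrix.IsHermitian.conjStarAlgAut_star_eigenvectorUnitary hH
      rw [Unitary.conjStarAlgAut_star_apply] at h
      exact h
  have conj_mul : ∀ X Y : Matrix (Fin 16) (Fin 16) ℂ,
      (star U * X * U) * (star U * Y * U) = star U * (X * Y) * U := by
    intro X Y
    calc (star U * X * U) * (star U * Y * U)
        = star U * X * (U * star U) * (Y * U) := by simp only [Matrix.mul_assoc]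
      _ = star U * (X * Y) * U := by
          rw [hUU', Matrix.mul_one]; simp only [Matrix.mul_assoc]
  set r : ℂ := ((‖p‖ ^ 2 : ℝ) : ℂ) with hr
  have hD3 : Matrix.diagonal f * Matrix.diagonal f * Matrix.diagonal f
      = (4 * r) • Matrix.diagonal f := by
    rw [← hdiag, conj_mul, conj_mul, Mminus_cube]
    rw [Matrix.mul_smul, Matrix.smul_mul]
  have key : ∀ i, (ev i : ℂ) ^ 3 = 4 * r * (ev i : ℂ) := by
    intro i
    have h := congrFun (congrFun hD3 i) i
    rw [Matrix.diagonal_mul_diagonal, Matrix.diagonal_mul_diagonal] at h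
    simp only [Matrix.diagonal_apply_eq, Pi.mul_apply, Matrix.smul_apply,
      smul_eq_mul, hf] at h
    calc (ev i : ℂ) ^ 3 = (ev i : ℂ) * (ev i : ℂ) * (ev i : ℂ) := by ring
      _ = 4 * r * (ev i : ℂ) := h
  have htrc : ∑ i, (ev i : ℂ) = 0 := by
    have h := congrArg Matrix.trace hdiag
    rw [Matrix.trace_mul_cycle, hUU', Matrix.one_mul, Mminus_trace,
      Matrix.trace_diagonal] at h
    exact h.symm
  have htrc2 : ∑ i, (ev i : ℂ) ^ 2 = 32 * r := by
    have hD2 : Matrix.diagonal f * Matrix.diagonal f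
        = star U * (Mminus p * Mminus p) * U := by rw [← hdiag, conj_mul]
    have h := congrArg Matrix.trace hD2
    rw [Matrix.diagonal_mul_diagonal, Matrix.trace_diagonal,
      Matrix.trace_mul_cycle, hUU', Matrix.one_mul, Mminus_sq_trace] at h
    rw [← h]
    apply Finset.sum_congr rfl
    intro i _
    simp [hf]
    ring
  have hsum : ∑ i, ev i = 0 := by exact_mod_cast htrc
  have hsq32 : ∑ i, ev i ^ 2 = 32 * ‖p‖ ^ 2 := by
    have : ((∑ i, ev i ^ 2 : ℝ) : ℂ) = ((32 * ‖p‖ ^ 2 : ℝ) : ℂ) := by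
      push_cast
      rw [htrc2, hr]
      push_cast
      ring
    exact_mod_cast this
  have he3 : ∀ i, ev i ^ 3 = 4 * ‖p‖ ^ 2 * ev i := by
    intro i
    have : ((ev i ^ 3 : ℝ) : ℂ) = ((4 * ‖p‖ ^ 2 * ev i : ℝ) : ℂ) := by
      push_cast
      rw [key i, hr]
      push_cast
      ring
    exact_mod_cast this
  set c : ℝ := 2 * ‖p‖ with hc
  have hnormpos : 0 < ‖p‖ := norm_pos_iff.mpr hp
  have hcpos : 0 < c := by rw [hc]; linarith
  have hc2 : c ^ 2 = 4 * ‖p‖ ^ 2 := by rw [hc]; ring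
  have h3 : ∀ i, ev i = -c ∨ ev i = 0 ∨ ev i = c := by
    intro i
    have h0 : ev i * ((ev i + c) * (ev i - c)) = 0 := by
      linear_combination he3 i - ev i * hc2
    rcases mul_eq_zero.mp h0 with h | h
    · exact Or.inr (Or.inl h)
    rcases mul_eq_zero.mp h with h | h
    · exact Or.inl (by linarith)
    · exact Or.inr (Or.inr (by linarith))
  have hsq8 : ∑ i, ev i ^ 2 = 8 * c ^ 2 := by rw [hsq32, hc2]; ring
  obtain ⟨hS, hT, hZ⟩ := card_lemma c hcpos ev h3 hsum hsq8
  obtain ⟨σ, hσ⟩ := exists_perm c hcpos ev hS hT hZ h3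
  set P : Matrix (Fin 16) (Fin 16) ℂ := (1 : Matrix (Fin 16) (Fin 16) ℂ).submatrix σ id
    with hP
  have hPmem : P ∈ Matrix.unitaryGroup (Fin 16) ℂ := by
    rw [Matrix.mem_unitaryGroup_iff]
    ext i j
    simp [hP, Matrix.mul_apply, Matrix.submatrix_apply, Matrix.one_apply, Finset.sum_ite_eq,
      Matrix.star_eq_conjTranspose, Matrix.conjTranspose_apply, apply_ite]
  have hconj : P * Matrix.diagonal f * Pᴴ = (Matrix.diagonal f).submatrix σ σ := by
    ext i j
    simp [hP, Matrix.mul_apply, Matrix.submatrix_apply, Matrix.one_apply, Finset.sum_ite_eq,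
      Matrix.conjTranspose_apply, apply_ite]
  have hstarUH : (star U)ᴴ = U := by
    rw [Matrix.star_eq_conjTranspose, Matrix.conjTranspose_conjTranspose]
  refine ⟨P * star U, mul_mem hPmem (Unitary.star_mem hUmem), ?_⟩
  calc P * star U * Mminus p * (P * star U)ᴴ
      = P * (star U * Mminus p * U) * Pᴴ := by
        rw [Matrix.conjTranspose_mul, hstarUH]
        simp only [Matrix.mul_assoc]
    _ = (Matrix.diagonal f).submatrix σ σ := by rw [hdiag]; exact hconj
    _ = diagMminus p := by
        rw [Matrix.submatrix_diagonal_equiv]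
        unfold diagMminus
        refine congrArg Matrix.diagonal (funext fun i => ?_)
        have hdi := congrFun hσ i
        simp only [Function.comp_apply] at hdi
        simp only [Function.comp_apply, hf, hdi, hc]
        split_ifs <;> push_cast <;> ring
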